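/- Fidelity bound for coherent measurements: for a pure state |ψ⟩ in A ⊗ B, a POVM {Λ_z} on B, the coherent copy U_Z|z⟩_A = |z⟩_A|z⟩_{A'}, and V_Z = Σ_z |z⟩_{A'} ⊗ √Λ_z acting on B, one has ⟨ψ|U_Z† V_Z|ψ⟩ ≥ Σ_z ⟨ψ|(|z⟩⟨z|_A ⊗ Λ_z^B)|ψ⟩; hence F(U_Z|ψ⟩, V_Z|ψ⟩) ≥ P where P is the success probability of the POVM {Λ_z} at guessing Z on A. -/

import Mathlib

open Matrix Kronecker Complex BigOperators
open scoped ComplexOrder Classical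

noncomputable section

/-- primitive d-th root of unity -/
def omg (d : ℕ) : ℂ := Complex.exp (2 * Real.pi * Complex.I / d)

/-- standard basis vector |z⟩ -/
def ketZ (d : ℕ) (z : Fin d) : Fin d → ℂ := fun i => if i = z then 1 else 0

/-- Fourier basis vector |x̃⟩ = (1/√d) Σ_z ω^{xz} |z⟩ -/
def ketX (d : ℕ) (x : Fin d) : Fin d → ℂ :=
  fun z => ((1 / Real.sqrt d : ℝ) : ℂ) * omg d ^ ((x : ℕ) * (z : ℕ))

/-- projector |z⟩⟨z| -/
def projZ (d : ℕ) (z : Fin d) : Matrix (Fin d) (Fin d) ℂ :=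
  Matrix.vecMulVec (ketZ d z) (star (ketZ d z))

/-- projector |x̃⟩⟨x̃| -/
def projX (d : ℕ) (x : Fin d) : Matrix (Fin d) (Fin d) ℂ :=
  Matrix.vecMulVec (ketX d x) (star (ketX d x))

/-- positive semidefinite square root (0 if not PSD) -/
def msqrt {n : Type*} [Fintype n] [DecidableEq n] (M : Matrix n n ℂ) : Matrix n n ℂ :=
  if h : M.PosSemidef then
    (h.1.eigenvectorUnitary : Matrix n n ℂ) * diagonal ((↑) ∘ Real.sqrt ∘ h.1.eigenvalues) *
      (star h.1.eigenvectorUnitary : Matrix n n ℂ) else 0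

/-- trace norm ‖M‖₁ = Tr √(MᴴM) -/
def trNorm {n : Type*} [Fintype n] [DecidableEq n] (M : Matrix n n ℂ) : ℝ :=
  (msqrt (Mᴴ * M)).trace.re

/-- fidelity F(ρ,σ) = ‖√ρ√σ‖₁ -/
def Fid {n : Type*} [Fintype n] [DecidableEq n] (ρ σ : Matrix n n ℂ) : ℝ :=
  trNorm (msqrt ρ * msqrt σ)

/-- a POVM with d outcomes -/
def IsPOVM {n : Type*} [Fintype n] [DecidableEq n] {d : ℕ} (Λ : Fin d → Matrix n n ℂ) : Prop :=
  (∀ z, (Λ z).PosSemidef) ∧ ∑ z, Λ z = 1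

/-- optimal guessing probability of the measurement with rank-one elements P z on A,
given the B part of the bipartite state ψ -/
def Pguess {d : ℕ} {β : Type*} [Fintype β] [DecidableEq β]
    (P : Fin d → Matrix (Fin d) (Fin d) ℂ) (ψ : Matrix (Fin d × β) (Fin d × β) ℂ) : ℝ :=
  sSup { r | ∃ Λ : Fin d → Matrix β β ℂ, IsPOVM Λ ∧
    r = (Matrix.trace ((∑ z, P z ⊗ₖ Λ z) * ψ)).re }

/-- the coherent copy U_Z ⊗ 1_B : |z⟩_A|b⟩_B ↦ |z⟩_A|z⟩_{A'}|b⟩_B,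
with output index ((a, a'), b) -/
def UZext (d : ℕ) (β : Type*) [Fintype β] [DecidableEq β] :
    Matrix ((Fin d × Fin d) × β) (Fin d × β) ℂ :=
  fun q p => if q.1.1 = p.1 ∧ q.1.2 = p.1 ∧ q.2 = p.2 then 1 else 0

/-- Bob's coherent measurement V_Z = Σ_z |z⟩_{A'} ⊗ √Λ_z acting on B
(identity on A), with output index ((a, a'), b) -/
def VZext {d : ℕ} {β : Type*} [Fintype β] [DecidableEq β]
    (Λ : Fin d → Matrix β β ℂ) : Matrix ((Fin d × Fin d) × β) (Fin d × β) ℂ :=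
  fun q p => if q.1.1 = p.1 then msqrt (Λ q.1.2) q.2 p.2 else 0


lemma eig_le_one' {n : Type*} [Fintype n] [DecidableEq n] {A : Matrix n n ℂ}
    (hA : A.PosSemidef) (h1 : (1 - A).PosSemidef) (i : n) : hA.1.eigenvalues i ≤ 1 := by
  have hnorm : star ⇑(hA.1.eigenvectorBasis i) ⬝ᵥ ⇑(hA.1.eigenvectorBasis i) = 1 := by
    have h := (orthonormal_iff_ite.mp hA.1.eigenvectorBasis.orthonormal) i i
    rw [EuclideanSpace.inner_eq_star_dotProduct] at h
    simpa [dotProduct, mul_comm] using h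
  have h0 := h1.dotProduct_mulVec_nonneg ⇑(hA.1.eigenvectorBasis i)
  rw [sub_mulVec, one_mulVec, dotProduct_sub, hA.1.mulVec_eigenvectorBasis,
    dotProduct_smul, hnorm, Complex.real_smul, mul_one] at h0
  have h2 := (Complex.le_def.mp h0).1
  simp at h2
  linarith

lemma sqrt_sub_psd' {n : Type*} [Fintype n] [DecidableEq n] {A : Matrix n n ℂ}
    (hA : A.PosSemidef) (h1 : (1 - A).PosSemidef) : (msqrt A - A).PosSemidef := by
  have key : (hA.1.eigenvectorUnitary : Matrix n n ℂ) *
      Matrix.diagonal ((RCLike.ofReal : ℝ → ℂ) ∘ fun i => Real.sqrt (hA.1.eigenvalues i) - hA.1.eigenvalues i) *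
      (star hA.1.eigenvectorUnitary : Matrix n n ℂ) = msqrt A - A := by
    have hg : Matrix.diagonal ((RCLike.ofReal : ℝ → ℂ) ∘ fun i => Real.sqrt (hA.1.eigenvalues i) - hA.1.eigenvalues i)
        = Matrix.diagonal ((RCLike.ofReal : ℝ → ℂ) ∘ Real.sqrt ∘ hA.1.eigenvalues)
          - Matrix.diagonal ((RCLike.ofReal : ℝ → ℂ) ∘ hA.1.eigenvalues) := by
      rw [Matrix.diagonal_sub]
      exact congrArg Matrix.diagonal (funext fun i => by simp [Function.comp, Complex.ofReal_sub])
    rw [hg, mul_sub, sub_mul, msqrt, dif_pos hA]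
    have hs := hA.1.spectral_theorem
    exact congrArg₂ (· - ·) rfl hs.symm
  rw [← key, Matrix.star_eq_conjTranspose]
  refine Matrix.PosSemidef.mul_mul_conjTranspose_same ?_ _
  refine Matrix.posSemidef_diagonal_iff.mpr fun i => ?_
  rw [Function.comp_apply]
  have h2 : (0:ℝ) ≤ Real.sqrt (hA.1.eigenvalues i) - hA.1.eigenvalues i := by
    have hnn := hA.eigenvalues_nonneg i
    have hle := eig_le_one' hA h1 i
    nlinarith [Real.sq_sqrt hnn, Real.sqrt_nonneg (hA.1.eigenvalues i),
      Real.sqrt_le_sqrt hle, Real.sqrt_one]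
  exact Complex.zero_le_real.2 h2

/-- ⟨ψ|U_Z† V_Z|ψ⟩ ≥ Σ_z ⟨ψ|(|z⟩⟨z| ⊗ Λ_z)|ψ⟩, hence the fidelity
F(U_Z|ψ⟩, V_Z|ψ⟩) = |⟨U_Zψ|V_Zψ⟩| is at least the guessing probability of {Λ_z}. -/
theorem coherent_fidelity_bound {d : ℕ} [NeZero d] {β : Type*} [Fintype β] [DecidableEq β]
    (Λ : Fin d → Matrix β β ℂ) (hΛ : IsPOVM Λ)
    (ψ : Fin d × β → ℂ) (hψ : ∑ p, Complex.normSq (ψ p) = 1) :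
    ((star ((UZext d β).mulVec ψ)) ⬝ᵥ ((VZext Λ).mulVec ψ)).re
      ≥ (∑ z, star ψ ⬝ᵥ ((projZ d z ⊗ₖ Λ z).mulVec ψ)).re ∧
    ‖(star ((UZext d β).mulVec ψ)) ⬝ᵥ ((VZext Λ).mulVec ψ)‖
      ≥ (∑ z, star ψ ⬝ᵥ ((projZ d z ⊗ₖ Λ z).mulVec ψ)).re := by
  obtain ⟨hpsd, hsum⟩ := hΛ
  -- rewrite LHS as a sum of quadratic forms with msqrt
  have hL : (star ((UZext d β).mulVec ψ)) ⬝ᵥ ((VZext Λ).mulVec ψ)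
      = ∑ a : Fin d, (star fun b => ψ (a,b)) ⬝ᵥ ((msqrt (Λ a)).mulVec fun b => ψ (a,b)) := by
    simp only [dotProduct, mulVec, UZext, VZext, Pi.star_apply, Fintype.sum_prod_type]
    simp [apply_ite, ite_and, Finset.sum_ite_eq, Finset.sum_ite_eq', Finset.mul_sum, mul_comm]
  have hR : ∀ z : Fin d, star ψ ⬝ᵥ ((projZ d z ⊗ₖ Λ z).mulVec ψ)
      = (star fun b => ψ (z,b)) ⬝ᵥ ((Λ z).mulVec fun b => ψ (z,b)) := by
    intro z
    simp only [dotProduct, mulVec, projZ, kroneckerMap_apply, vecMulVec_apply, ketZ,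
      Pi.star_apply, Fintype.sum_prod_type]
    simp [apply_ite, ite_and, Finset.sum_ite_eq, Finset.sum_ite_eq', Finset.mul_sum,
      Finset.sum_mul, mul_comm, mul_left_comm]
  have h1z : ∀ z : Fin d, (1 - Λ z).PosSemidef := by
    intro z
    have : 1 - Λ z = ∑ w ∈ Finset.univ.erase z, Λ w := by
      rw [← hsum, Finset.sum_erase_eq_sub (Finset.mem_univ z)]
    rw [this]
    refine Finset.sum_induction _ _ (fun a b ha hb => ha.add hb) Matrix.PosSemidef.zero
      (fun w _ => hpsd w)
  have hz : ∀ z : Fin d,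
      (star ψ ⬝ᵥ ((projZ d z ⊗ₖ Λ z).mulVec ψ)).re
        ≤ ((star fun b => ψ (z,b)) ⬝ᵥ ((msqrt (Λ z)).mulVec fun b => ψ (z,b))).re := by
    intro z
    rw [hR z]
    have hm : msqrt (Λ z) = msqrt (Λ z) := rfl
    rw [hm]
    have h := (sqrt_sub_psd' (hpsd z) (h1z z)).dotProduct_mulVec_nonneg (fun b => ψ (z,b))
    rw [sub_mulVec, dotProduct_sub] at h
    have h2 := (Complex.le_def.mp h).1
    rw [Complex.zero_re, Complex.sub_re] at h2
    linarith
  have hmain : (∑ z, star ψ ⬝ᵥ ((projZ d z ⊗ₖ Λ z).mulVec ψ)).re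
      ≤ ((star ((UZext d β).mulVec ψ)) ⬝ᵥ ((VZext Λ).mulVec ψ)).re := by
    rw [hL, Complex.re_sum, Complex.re_sum]
    exact Finset.sum_le_sum fun z _ => hz z
  refine ⟨hmain, le_trans hmain (Complex.re_le_norm _)⟩
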